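/- Evaluation of the antisymmetrized one-parameter integral κ arising in the heat coefficient A₁: let m ≥ 3 be an integer and μ, ν positive reals with μ ≠ ν. Then ∫_0^1 τ·([μτ + ν(1−τ)]^{−(m+2)/2} − [ντ + μ(1−τ)]^{−(m+2)/2}) dτ = −(2/m)·(μ^{−m/2} + ν^{−m/2})/(μ − ν) − (8/(m(m−2)))·(μ^{1−m/2} − ν^{1−m/2})/(μ − ν)². -/

import Mathlib

open MeasureTheory intervalIntegral

namespace NLT

private lemma convex_pos {a b x : ℝ} (ha : 0 < a) (hb : 0 < b) (h0 : 0 ≤ x) (h1 : x ≤ 1) :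
    0 < a * x + b * (1 - x) := by
  rcases le_total a b with h | h
  · nlinarith [mul_nonneg (sub_nonneg.mpr h) (sub_nonneg.mpr h1)]
  · nlinarith [mul_nonneg (sub_nonneg.mpr h) h0]

/-- Evaluation of the antisymmetrized one-parameter integral `κ` arising in the heat kernel
coefficient `A₁`: for `m ≥ 3` and positive `μ ≠ ν`,
`∫₀¹ τ([μτ+ν(1−τ)]^{−(m+2)/2} − [ντ+μ(1−τ)]^{−(m+2)/2}) dτ
  = −(2/m)(μ^{−m/2}+ν^{−m/2})/(μ−ν) − (8/(m(m−2)))(μ^{1−m/2}−ν^{1−m/2})/(μ−ν)²`. -/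
theorem kappa_integral (m : ℕ) (hm : 3 ≤ m) (μ ν : ℝ) (hμ : 0 < μ) (hν : 0 < ν)
    (hμν : μ ≠ ν) :
    ∫ τ in (0 : ℝ)..1,
        τ * ((μ * τ + ν * (1 - τ)) ^ (-((m : ℝ) + 2) / 2)
          - (ν * τ + μ * (1 - τ)) ^ (-((m : ℝ) + 2) / 2))
      = -(2 / (m : ℝ)) * ((μ ^ (-(m : ℝ) / 2) + ν ^ (-(m : ℝ) / 2)) / (μ - ν))
        - (8 / ((m : ℝ) * ((m : ℝ) - 2)))
          * ((μ ^ (1 - (m : ℝ) / 2) - ν ^ (1 - (m : ℝ) / 2)) / (μ - ν) ^ 2) := by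
  have hx01 : (0:ℝ) ≤ 1 := zero_le_one
  set M : ℝ := (m : ℝ) with hMdef
  have hM3 : (3:ℝ) ≤ M := by rw [hMdef]; exact_mod_cast hm
  have hM0 : M ≠ 0 := by linarith
  have hM2 : M - 2 ≠ 0 := by linarith
  have hM2' : 2 - M ≠ 0 := by linarith
  have hc : μ - ν ≠ 0 := sub_ne_zero.mpr hμν
  set F : ℝ → ℝ := fun τ =>
    (1/(μ-ν)^2) * ((2/(2-M)) * (μ*τ + ν*(1-τ)) ^ (1 - M/2)
        + (2*ν/M) * (μ*τ + ν*(1-τ)) ^ (-M/2))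
    - (1/(μ-ν)^2) * ((2/(2-M)) * (ν*τ + μ*(1-τ)) ^ (1 - M/2)
        + (2*μ/M) * (ν*τ + μ*(1-τ)) ^ (-M/2)) with hF
  have key : ∫ τ in (0:ℝ)..1,
      τ * ((μ * τ + ν * (1 - τ)) ^ (-(M + 2) / 2)
        - (ν * τ + μ * (1 - τ)) ^ (-(M + 2) / 2)) = F 1 - F 0 := by
    apply intervalIntegral.integral_eq_sub_of_hasDerivAt
    · intro x hx
      rw [Set.uIcc_of_le hx01] at hx
      obtain ⟨hx0, hx1⟩ := hx
      have hapos : 0 < μ*x + ν*(1-x) := convex_pos hμ hν hx0 hx1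
      have hbpos : 0 < ν*x + μ*(1-x) := convex_pos hν hμ hx0 hx1
      have ha : HasDerivAt (fun τ : ℝ => μ*τ + ν*(1-τ)) (μ - ν) x := by
        have h1 : HasDerivAt (fun τ : ℝ => μ*τ) μ x := by
          simpa using (hasDerivAt_id x).const_mul μ
        have h2 : HasDerivAt (fun τ : ℝ => ν*(1-τ)) (-ν) x := by
          simpa using ((hasDerivAt_const x (1:ℝ)).sub (hasDerivAt_id x)).const_mul ν
        exact (h1.add h2).congr_deriv (by ring)
      have hb : HasDerivAt (fun τ : ℝ => ν*τ + μ*(1-τ)) (ν - μ) x := by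
        have h1 : HasDerivAt (fun τ : ℝ => ν*τ) ν x := by
          simpa using (hasDerivAt_id x).const_mul ν
        have h2 : HasDerivAt (fun τ : ℝ => μ*(1-τ)) (-μ) x := by
          simpa using ((hasDerivAt_const x (1:ℝ)).sub (hasDerivAt_id x)).const_mul μ
        exact (h1.add h2).congr_deriv (by ring)
      have dA1 := ha.rpow_const (p := 1 - M/2) (Or.inl hapos.ne')
      have dA2 := ha.rpow_const (p := -M/2) (Or.inl hapos.ne')
      have dB1 := hb.rpow_const (p := 1 - M/2) (Or.inl hbpos.ne')
      have dB2 := hb.rpow_const (p := -M/2) (Or.inl hbpos.ne')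
      have H := (((dA1.const_mul (2/(2-M))).add (dA2.const_mul (2*ν/M))).const_mul
          (1/(μ-ν)^2)).sub
        (((dB1.const_mul (2/(2-M))).add (dB2.const_mul (2*μ/M))).const_mul (1/(μ-ν)^2))
      convert H using 1
      · rfl
      have e1 : (1 - M/2) - 1 = -M/2 := by ring
      have e2 : (-M/2) - 1 = -(M+2)/2 := by ring
      rw [e1, e2]
      have ra : (μ*x + ν*(1-x)) ^ (-M/2)
          = (μ*x + ν*(1-x)) * (μ*x + ν*(1-x)) ^ (-(M+2)/2) := by
        rw [show -M/2 = 1 + (-(M+2)/2) by ring, Real.rpow_add hapos, Real.rpow_one]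
      have rb : (ν*x + μ*(1-x)) ^ (-M/2)
          = (ν*x + μ*(1-x)) * (ν*x + μ*(1-x)) ^ (-(M+2)/2) := by
        rw [show -M/2 = 1 + (-(M+2)/2) by ring, Real.rpow_add hbpos, Real.rpow_one]
      rw [ra, rb]
      field_simp
      ring
    · apply ContinuousOn.intervalIntegrable
      apply ContinuousOn.mul continuousOn_id
      apply ContinuousOn.sub
      · apply ContinuousOn.rpow_const
        · exact ((continuous_const.mul continuous_id).add
            (continuous_const.mul (continuous_const.sub continuous_id))).continuousOn
        · intro x hx
          rw [Set.uIcc_of_le hx01] at hx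
          left
          have : (0:ℝ) < μ*x + ν*(1-x) := convex_pos hμ hν hx.1 hx.2
          simpa using this.ne'
      · apply ContinuousOn.rpow_const
        · exact ((continuous_const.mul continuous_id).add
            (continuous_const.mul (continuous_const.sub continuous_id))).continuousOn
        · intro x hx
          rw [Set.uIcc_of_le hx01] at hx
          left
          have : (0:ℝ) < ν*x + μ*(1-x) := convex_pos hν hμ hx.1 hx.2
          simpa using this.ne'
  rw [key, hF]
  norm_num
  have hμ1 : μ ^ (1 - M/2) = μ * μ ^ (-M/2) := by
    rw [show 1 - M/2 = 1 + (-M/2) by ring, Real.rpow_add hμ, Real.rpow_one]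
  have hν1 : ν ^ (1 - M/2) = ν * ν ^ (-M/2) := by
    rw [show 1 - M/2 = 1 + (-M/2) by ring, Real.rpow_add hν, Real.rpow_one]
  rw [hμ1, hν1]
  field_simp
  ring

end NLT
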